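/- (Theorem 2, converse direction) If a surjective map φ with dom φ ⊆ ⋃_{α ∈ C_k(I)} M^α and cod φ ⊆ M^I satisfies φ_{φ_a|_β} = φ_a and φ_a|_{dom a} = a for all a ∈ dom φ and k-element β ⊆ I, then the identity map ω = id_{cod φ} is a k-frontal embedding into M^I (i.e., each restriction map x ↦ x|_β is injective on cod φ), dom φ = ⋃_{σ ∈ C_k(I)} { x|_σ : x ∈ cod φ }, and φ_a = ω_{dom a}⁻¹(a) for all a ∈ dom φ. -/
import Mathlib


/-- Theorem 2, converse direction: if a surjective map φ satisfies the functional
equations, then the identity on cod φ is a k-frontal embedding into M^I,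
dom φ is the set of all k-restrictions of elements of cod φ, and
φ_a = ω_{dom a}⁻¹(a). -/
theorem stmt_15 {M : Type*} (k : ℕ) (I : Set ℝ) (hI : (k : ℕ∞) < I.encard)
    (D : Set (Σ α : Set I, (α → M)))
    (hD : ∀ p ∈ D, p.1.encard = k)
    (φ : D → (I → M))
    (h1 : ∀ a : D, ∀ β : Set I, β.encard = k →
      ∃ hb : (⟨β, fun t => φ a ↑t⟩ : Σ α : Set I, (α → M)) ∈ D,
        φ ⟨⟨β, fun t => φ a ↑t⟩, hb⟩ = φ a)
    (h2 : ∀ a : D, ∀ t : a.1.1, φ a ↑t = a.1.2 t) :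
    (∀ β : Set I, β.encard = k → ∀ x₁ ∈ Set.range φ, ∀ x₂ ∈ Set.range φ,
        (∀ t : β, x₁ ↑t = x₂ ↑t) → x₁ = x₂) ∧
    (D = {p | p.1.encard = (k : ℕ∞) ∧ ∃ x ∈ Set.range φ, ∀ t : p.1, x ↑t = p.2 t}) ∧
    (∀ a : D, (∀ t : a.1.1, φ a ↑t = a.1.2 t) ∧
      ∀ x ∈ Set.range φ, (∀ t : a.1.1, x ↑t = a.1.2 t) → x = φ a) := by
  have key : ∀ β : Set I, β.encard = k → ∀ x₁ ∈ Set.range φ, ∀ x₂ ∈ Set.range φ,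
      (∀ t : β, x₁ ↑t = x₂ ↑t) → x₁ = x₂ := by
    rintro β hβ _ ⟨a₁, rfl⟩ _ ⟨a₂, rfl⟩ h
    obtain ⟨hb₁, e₁⟩ := h1 a₁ β hβ
    obtain ⟨hb₂, e₂⟩ := h1 a₂ β hβ
    have hs : (⟨β, fun t => φ a₁ ↑t⟩ : Σ α : Set I, (α → M)) = ⟨β, fun t => φ a₂ ↑t⟩ :=
      Sigma.ext rfl (heq_of_eq (funext fun t => h t))
    rw [← e₁, ← e₂]
    exact congrArg φ (Subtype.ext hs)
  refine ⟨key, ?_, ?_⟩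
  · ext p
    constructor
    · intro hp
      exact ⟨hD p hp, φ ⟨p, hp⟩, ⟨⟨p, hp⟩, rfl⟩, fun t => h2 ⟨p, hp⟩ t⟩
    · rintro ⟨hk, x, ⟨a, rfl⟩, hx⟩
      obtain ⟨hb, -⟩ := h1 a p.1 hk
      have hs : (⟨p.1, fun t => φ a ↑t⟩ : Σ α : Set I, (α → M)) = p :=
        Sigma.ext rfl (heq_of_eq (funext fun t => hx t))
      rw [← hs]
      exact hb
  · intro a
    refine ⟨h2 a, fun x hx hagree => ?_⟩
    exact key a.1.1 (hD a.1 a.2) x hx (φ a) ⟨a, rfl⟩ (fun t => by rw [hagree t, h2 a t])
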